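/- Let f be a nonzero holomorphic (or polynomial) function vanishing at 0 ∈ ℂⁿ, assign positive rational weights w(x_i) to the variables, and let w(f) be the weighted multiplicity of f (the minimum of Σᵢ bᵢ·w(xᵢ) over monomials x^b appearing in f). Then the log canonical threshold of f at 0 satisfies c₀(f) ≤ (Σᵢ w(xᵢ)) / w(f). -/

import Mathlib

open MeasureTheory

lemma rpow_sum_aux {ι : Type*} (s : Finset ι) {t : ℝ} (ht : 0 < t) (e : ι → ℝ) :
    t ^ (∑ i ∈ s, e i) = ∏ i ∈ s, t ^ e i := by
  induction s using Finset.cons_induction with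
  | empty => simp
  | cons a s ha ih => rw [Finset.sum_cons, Finset.prod_cons, Real.rpow_add ht, ih]

lemma rpow_anti_aux {x y e : ℝ} (hx : 0 < x) (hxy : x ≤ y) (he : e ≤ 0) : y ^ e ≤ x ^ e := by
  have hy : 0 < y := lt_of_lt_of_le hx hxy
  have hz : ∀ z : ℝ, 0 ≤ z → z ^ e = (z ^ (-e))⁻¹ := fun z hzz => by
    rw [← Real.rpow_neg hzz, neg_neg]
  rw [hz x hx.le, hz y hy.le]
  exact inv_anti₀ (Real.rpow_pos_of_pos hx _)
    (Real.rpow_le_rpow hx.le hxy (neg_nonneg.mpr he))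

lemma zero_set_null : ∀ (n : ℕ) (f : MvPolynomial (Fin n) ℂ), f ≠ 0 →
    volume {z : Fin n → ℂ | MvPolynomial.eval z f = 0} = 0 := by
  intro n
  induction n with
  | zero =>
    intro f hf
    have h : {z : Fin 0 → ℂ | MvPolynomial.eval z f = 0} = ∅ := by
      rw [Set.eq_empty_iff_forall_notMem]
      intro z hz
      apply hf
      rw [MvPolynomial.eq_C_of_isEmpty f] at hz ⊢
      simp only [MvPolynomial.eval_C, Set.mem_setOf_eq] at hz
      rw [hz, map_zero]
    rw [h, measure_empty]
  | succ n ih =>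
    intro f hf
    set p := MvPolynomial.finSuccEquiv ℂ n f with hpdef
    have hp0 : p ≠ 0 := by
      intro h
      apply hf
      exact (MvPolynomial.finSuccEquiv ℂ n).injective (by rw [← hpdef, h, map_zero])
    have hq : p.leadingCoeff ≠ 0 := Polynomial.leadingCoeff_ne_zero.mpr hp0
    set T : Set (ℂ × (Fin n → ℂ)) :=
      {ys | MvPolynomial.eval (Fin.cons ys.1 ys.2) f = 0} with hTdef
    have hcont : Continuous fun ys : ℂ × (Fin n → ℂ) =>
        MvPolynomial.eval (Fin.cons ys.1 ys.2) f := by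
      apply (MvPolynomial.continuous_eval f).comp
      apply continuous_pi
      intro j
      cases j using Fin.cases with
      | zero => simpa using continuous_fst
      | succ j => simpa [Function.comp_def] using (continuous_apply j).comp continuous_snd
    have hTmeas : MeasurableSet T :=
      hcont.measurable (MeasurableSet.singleton 0)
    have key : volume {z : Fin (n+1) → ℂ | MvPolynomial.eval z f = 0}
        = ((volume : Measure ℂ).prod (volume : Measure (Fin n → ℂ))) T := by
      have hpre : {z : Fin (n+1) → ℂ | MvPolynomial.eval z f = 0}
          = (MeasurableEquiv.piFinSuccAbove (fun _ : Fin (n+1) => ℂ) 0) ⁻¹' T := by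
        ext z
        simp only [Set.mem_setOf_eq, Set.mem_preimage, hTdef,
          MeasurableEquiv.piFinSuccAbove_apply, Fin.insertNthEquiv_zero,
          Fin.consEquiv_symm_apply]
        rw [Fin.cons_self_tail]
      rw [hpre]
      exact (measurePreserving_piFinSuccAbove (fun _ : Fin (n+1) => (volume : Measure ℂ))
        0).measure_preimage hTmeas.nullMeasurableSet
    rw [key, ← Measure.measurePreserving_swap.measure_preimage hTmeas.nullMeasurableSet]
    have hTsw : MeasurableSet (Prod.swap ⁻¹' T : Set ((Fin n → ℂ) × ℂ)) :=
      hTmeas.preimage measurable_swap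
    rw [Measure.measure_prod_null hTsw]
    have hae : ∀ᵐ s : (Fin n → ℂ) ∂volume, MvPolynomial.eval s p.leadingCoeff ≠ 0 := by
      rw [ae_iff]
      simpa using ih p.leadingCoeff hq
    filter_upwards [hae] with s hs
    have hslice : (Prod.mk s ⁻¹' (Prod.swap ⁻¹' T) : Set ℂ)
        = {y : ℂ | (Polynomial.map (MvPolynomial.eval s) p).IsRoot y} := by
      ext y
      show MvPolynomial.eval (Fin.cons y s) f = 0 ↔ _
      rw [MvPolynomial.eval_eq_eval_mv_eval', ← hpdef]
      exact Iff.rfl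
    have hP : Polynomial.map (MvPolynomial.eval s) p ≠ 0 := by
      intro h
      apply hs
      have h2 := congrArg (fun q => Polynomial.coeff q p.natDegree) h
      simp only [Polynomial.coeff_map, Polynomial.coeff_zero] at h2
      rw [Polynomial.leadingCoeff]
      exact h2
    simp only [Pi.zero_apply]
    rw [hslice]
    exact (Polynomial.finite_setOf_isRoot hP).measure_zero _

theorem stmt_16 (n : ℕ) (f : MvPolynomial (Fin n) ℂ) (hf : f ≠ 0)
    (h0 : MvPolynomial.eval (0 : Fin n → ℂ) f = 0)
    (w : Fin n → ℚ) (hw : ∀ i, 0 < w i) (wf : ℚ)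
    (hmin : ∀ m ∈ f.support, wf ≤ ∑ i, (m i : ℚ) * w i)
    (hatt : ∃ m ∈ f.support, wf = ∑ i, (m i : ℚ) * w i)
    (c : ℝ) (hc : 0 < c)
    (hint : ∃ U ∈ nhds (0 : Fin n → ℂ),
      IntegrableOn (fun z => ‖MvPolynomial.eval z f‖ ^ (-(2 * c))) U volume) :
    c ≤ (∑ i, (w i : ℝ)) / (wf : ℝ) := by
  classical
  obtain ⟨m₀, hm₀s, hm₀⟩ := hatt
  have h00 : MvPolynomial.coeff 0 f = 0 := by
    have h1 : MvPolynomial.constantCoeff f = 0 := by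
      rw [← MvPolynomial.eval_zero]; exact h0
    rw [← h1, MvPolynomial.constantCoeff_eq]
  have hm₀0 : m₀ ≠ 0 := by
    intro h
    rw [MvPolynomial.mem_support_iff, h] at hm₀s
    exact hm₀s h00
  obtain ⟨i₀, hi₀⟩ : ∃ i, m₀ i ≠ 0 := by
    by_contra hcon
    push_neg at hcon
    exact hm₀0 (Finsupp.ext fun i => hcon i)
  have hwf : 0 < wf := by
    rw [hm₀]
    apply Finset.sum_pos'
    · intro i _
      exact mul_nonneg (by positivity) (hw i).le
    · exact ⟨i₀, Finset.mem_univ _,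
        mul_pos (by exact_mod_cast Nat.pos_of_ne_zero hi₀) (hw i₀)⟩
  set W : ℝ := (wf : ℝ) with hWdef
  have hW0 : 0 < W := by rw [hWdef]; exact_mod_cast hwf
  set S : ℝ := ∑ i, (w i : ℝ) with hSdef
  by_contra hcon
  push_neg at hcon
  have hSc : S < c * W := (div_lt_iff₀ hW0).mp hcon
  set C : ℝ := ∑ m ∈ f.support, ‖MvPolynomial.coeff m f‖ with hCdef
  have hC0 : 0 < C :=
    Finset.sum_pos (fun m hm => norm_pos_iff.mpr (MvPolynomial.mem_support_iff.mp hm))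
      ⟨m₀, hm₀s⟩
  obtain ⟨U, hU, hI⟩ := hint
  obtain ⟨ε, hε0, hεU⟩ := Metric.nhds_basis_closedBall.mem_iff.mp hU
  set M : ENNReal := ∫⁻ z in U, ENNReal.ofReal (‖MvPolynomial.eval z f‖ ^ (-(2 * c))) ∂volume
    with hMdef
  have hMlt : M < ⊤ := by
    refine lt_of_le_of_lt (lintegral_mono fun z => ?_) hI.2
    exact Real.ofReal_le_enorm _
  set K : ℝ := Real.pi ^ n * C ^ (-(2*c)) with hKdef
  have hK0 : 0 < K := by
    rw [hKdef]
    have := Real.rpow_pos_of_pos hC0 (-(2*c))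
    positivity
  have key : ∀ t : ℝ, 0 < t → t ≤ 1 → (∀ i, t ^ (w i : ℝ) ≤ ε) →
      ENNReal.ofReal (K * t ^ (2*S - 2*c*W)) ≤ M := by
    intro t ht0 ht1 htε
    set A : Set (Fin n → ℂ) :=
      Set.pi Set.univ (fun i => Metric.closedBall (0:ℂ) (t ^ (w i : ℝ))) with hAdef
    have hAU : A ⊆ U := by
      intro z hz
      apply hεU
      rw [Metric.mem_closedBall, dist_pi_le_iff hε0.le]
      intro i
      have hzi := hz i (Set.mem_univ i)
      rw [Metric.mem_closedBall] at hzi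
      exact le_trans hzi (htε i)
    have hvol : volume A = ENNReal.ofReal (Real.pi ^ n * t ^ (2*S)) := by
      rw [hAdef, volume_pi_pi]
      have heach : ∀ i : Fin n, volume (Metric.closedBall (0:ℂ) (t ^ (w i : ℝ)))
          = ENNReal.ofReal (Real.pi * t ^ (2 * (w i : ℝ))) := by
        intro i
        rw [Complex.volume_closedBall]
        have hpi : (NNReal.pi : ENNReal) = ENNReal.ofReal Real.pi := by
          rw [← NNReal.coe_real_pi, ENNReal.ofReal_coe_nnreal]
        rw [← ENNReal.ofReal_pow (Real.rpow_nonneg ht0.le _), hpi,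
          ← ENNReal.ofReal_mul (by positivity)]
        congr 1
        rw [← Real.rpow_natCast (t ^ ((w i : ℚ) : ℝ)) 2, ← Real.rpow_mul ht0.le]
        have h2c : ((w i : ℚ):ℝ) * ((2:ℕ):ℝ) = 2 * ((w i : ℚ):ℝ) := by push_cast; ring
        rw [h2c, mul_comm]
      rw [Finset.prod_congr rfl (fun i _ => heach i),
        ← ENNReal.ofReal_prod_of_nonneg (fun i _ => by positivity)]
      congr 1
      rw [Finset.prod_mul_distrib, Finset.prod_const]
      congr 1
      · simp
      · rw [← rpow_sum_aux Finset.univ ht0]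
        congr 1
        rw [hSdef, Finset.mul_sum]
    have hub : ∀ z ∈ A, ‖MvPolynomial.eval z f‖ ≤ C * t ^ W := by
      intro z hz
      rw [MvPolynomial.eval_eq']
      refine le_trans (norm_sum_le _ _) ?_
      rw [hCdef, Finset.sum_mul]
      apply Finset.sum_le_sum
      intro d hd
      rw [norm_mul]
      apply mul_le_mul_of_nonneg_left ?_ (norm_nonneg _)
      have h1 : ‖∏ i, z i ^ d i‖ ≤ ∏ i, (t ^ (w i : ℝ)) ^ (d i) := by
        rw [norm_prod]
        apply Finset.prod_le_prod (fun i _ => norm_nonneg _)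
        intro i _
        rw [norm_pow]
        apply pow_le_pow_left₀ (norm_nonneg _)
        have hzi := hz i (Set.mem_univ i)
        rw [Metric.mem_closedBall, dist_zero_right] at hzi
        exact hzi
      refine le_trans h1 ?_
      have h2 : ∏ i, (t ^ (w i : ℝ)) ^ (d i) = t ^ (∑ i, (w i : ℝ) * (d i : ℝ)) := by
        rw [rpow_sum_aux Finset.univ ht0]
        apply Finset.prod_congr rfl
        intro i _
        rw [Real.rpow_mul ht0.le, Real.rpow_natCast]
      rw [h2]
      apply Real.rpow_le_rpow_of_exponent_ge ht0 ht1
      have hcast : (wf : ℝ) ≤ ∑ i, (d i : ℝ) * (w i : ℝ) := by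
        exact_mod_cast hmin d hd
      rw [hWdef]
      refine le_trans hcast (le_of_eq ?_)
      apply Finset.sum_congr rfl
      intro i _
      ring
    set Z : Set (Fin n → ℂ) := {z | MvPolynomial.eval z f = 0} with hZdef
    have hZ0 : volume Z = 0 := zero_set_null n f hf
    have hAmeas : MeasurableSet A :=
      MeasurableSet.univ_pi (fun i => measurableSet_closedBall)
    have hZmeas : MeasurableSet Z :=
      (MvPolynomial.continuous_eval f).measurable (MeasurableSet.singleton 0)
    have hAZmeas : MeasurableSet (A \ Z) := hAmeas.diff hZmeas
    calc ENNReal.ofReal (K * t ^ (2*S - 2*c*W))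
        = ENNReal.ofReal ((C * t ^ W) ^ (-(2*c))) * volume A := by
          rw [hvol, ← ENNReal.ofReal_mul (by positivity)]
          congr 1
          rw [Real.mul_rpow hC0.le (Real.rpow_nonneg ht0.le _)]
          have h3 : (t ^ W) ^ (-(2*c)) = t ^ (W * (-(2*c))) := (Real.rpow_mul ht0.le _ _).symm
          have hsplit : t ^ (2*S - 2*c*W) = t ^ (2*S) * t ^ (W * (-(2*c))) := by
            rw [← Real.rpow_add ht0]
            congr 1
            ring
          rw [h3, hKdef, hsplit]
          ring
      _ = ENNReal.ofReal ((C * t ^ W) ^ (-(2*c))) * volume (A \ Z) := by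
          rw [measure_diff_null hZ0]
      _ = ∫⁻ _ in A \ Z, ENNReal.ofReal ((C * t ^ W) ^ (-(2*c))) ∂volume := by
          rw [setLIntegral_const]
      _ ≤ ∫⁻ z in A \ Z, ENNReal.ofReal (‖MvPolynomial.eval z f‖ ^ (-(2 * c))) ∂volume := by
          apply setLIntegral_mono' hAZmeas
          intro z hz
          apply ENNReal.ofReal_le_ofReal
          have hz0 : MvPolynomial.eval z f ≠ 0 := hz.2
          exact rpow_anti_aux (norm_pos_iff.mpr hz0) (hub z hz.1) (by linarith)
      _ ≤ M := by
          rw [hMdef]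
          exact lintegral_mono_set (Set.Subset.trans Set.diff_subset hAU)
  -- choose t small enough to get a contradiction
  have hd0 : (0:ℝ) < 2*c*W - 2*S := by linarith
  set d : ℝ := 2*c*W - 2*S with hddef
  set a : ℝ := Finset.univ.inf' ⟨i₀, Finset.mem_univ i₀⟩ (fun i => ((w i : ℚ) : ℝ)) with hadef
  have ha0 : (0:ℝ) < a := by
    rw [hadef]; refine (Finset.lt_inf'_iff _).mpr ?_
    intro i _
    exact_mod_cast hw i
  have haw : ∀ i, a ≤ ((w i : ℚ) : ℝ) := fun i => Finset.inf'_le _ (Finset.mem_univ i)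
  set Mr : ℝ := M.toReal with hMrdef
  have hMr0 : (0:ℝ) ≤ Mr := ENNReal.toReal_nonneg
  set β : ℝ := K / (Mr + 1) with hβdef
  have hβ0 : (0:ℝ) < β := by positivity
  set t : ℝ := min (min 1 (ε ^ (a⁻¹ : ℝ))) (β ^ (d⁻¹ : ℝ)) with htdef
  have ht0 : 0 < t :=
    lt_min (lt_min one_pos (Real.rpow_pos_of_pos hε0 _)) (Real.rpow_pos_of_pos hβ0 _)
  have ht1 : t ≤ 1 := le_trans (min_le_left _ _) (min_le_left _ _)
  have htε : ∀ i, t ^ ((w i : ℚ) : ℝ) ≤ ε := by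
    intro i
    have h1 : t ^ ((w i : ℚ) : ℝ) ≤ t ^ a := Real.rpow_le_rpow_of_exponent_ge ht0 ht1 (haw i)
    have h2 : t ≤ ε ^ (a⁻¹ : ℝ) := le_trans (min_le_left _ _) (min_le_right _ _)
    have h3 : t ^ a ≤ (ε ^ (a⁻¹:ℝ)) ^ a := Real.rpow_le_rpow ht0.le h2 ha0.le
    have h4 : (ε ^ (a⁻¹:ℝ)) ^ a = ε := by
      rw [← Real.rpow_mul hε0.le, inv_mul_cancel₀ (ne_of_gt ha0), Real.rpow_one]
    rw [h4] at h3
    linarith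
  have hKey := key t ht0 ht1 htε
  have htd : t ^ d ≤ β := by
    have h2 : t ≤ β ^ (d⁻¹:ℝ) := min_le_right _ _
    have h3 : t ^ d ≤ (β ^ (d⁻¹:ℝ)) ^ d := Real.rpow_le_rpow ht0.le h2 hd0.le
    rwa [← Real.rpow_mul hβ0.le, inv_mul_cancel₀ (ne_of_gt hd0), Real.rpow_one] at h3
  have hte : Mr + 1 ≤ K * t ^ (2*S - 2*c*W) := by
    have h1 : t ^ (2*S - 2*c*W) = (t ^ d)⁻¹ := by
      rw [show (2*S - 2*c*W) = -d by rw [hddef]; ring, Real.rpow_neg ht0.le]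
    rw [h1]
    have htd0 : 0 < t ^ d := Real.rpow_pos_of_pos ht0 _
    have h2 : β⁻¹ ≤ (t ^ d)⁻¹ := inv_anti₀ htd0 htd
    have h3 : β⁻¹ = (Mr + 1) / K := by
      rw [hβdef, inv_div]
    calc Mr + 1 = K * ((Mr+1)/K) := by field_simp
      _ ≤ K * (t^d)⁻¹ := by
          apply mul_le_mul_of_nonneg_left _ hK0.le
          rw [← h3]; exact h2
  have hfin : ENNReal.ofReal (Mr + 1) ≤ M :=
    le_trans (ENNReal.ofReal_le_ofReal hte) hKey
  rw [ENNReal.ofReal_le_iff_le_toReal hMlt.ne] at hfin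
  rw [← hMrdef] at hfin
  linarith
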